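/- Let x₁, x₂, x₃, x₄ ∈ ℝ³. The three-dimensional Lebesgue measure of the convex hull of the eight points {x₁, (x₁ + x₂)/2, (x₁ + x₃)/2, (x₁ + x₄)/2, (x₁ + x₂ + x₃)/3, (x₁ + x₂ + x₄)/3, (x₁ + x₃ + x₄)/3, (x₁ + x₂ + x₃ + x₄)/4} equals one fourth of the three-dimensional Lebesgue measure of the convex hull of {x₁, x₂, x₃, x₄}; that is, the median dual volume contribution of a tetrahedron to each of its vertices is exactly 1/4 of the tetrahedron's volume. -/

import Mathlib

open MeasureTheory Set
set_option maxHeartbeats 1000000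

noncomputable section MedianDualAux

abbrev E3 := EuclideanSpace ℝ (Fin 3)

/-- The eight generating points of the median dual cell at `v₁`. -/
def mdK (v₁ v₂ v₃ v₄ : E3) : Set E3 :=
  {v₁, (1/2 : ℝ) • (v₁ + v₂), (1/2 : ℝ) • (v₁ + v₃), (1/2 : ℝ) • (v₁ + v₄),
   (1/3 : ℝ) • (v₁ + v₂ + v₃), (1/3 : ℝ) • (v₁ + v₂ + v₄), (1/3 : ℝ) • (v₁ + v₃ + v₄),
   (1/4 : ℝ) • (v₁ + v₂ + v₃ + v₄)}

lemma mdK_mem₁ (v₁ v₂ v₃ v₄ : E3) : v₁ ∈ mdK v₁ v₂ v₃ v₄ := by simp [mdK]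
lemma mdK_mem₂ (v₁ v₂ v₃ v₄ : E3) : (1/2 : ℝ) • (v₁ + v₂) ∈ mdK v₁ v₂ v₃ v₄ := by simp [mdK]
lemma mdK_mem₃ (v₁ v₂ v₃ v₄ : E3) : (1/2 : ℝ) • (v₁ + v₃) ∈ mdK v₁ v₂ v₃ v₄ := by simp [mdK]
lemma mdK_mem₄ (v₁ v₂ v₃ v₄ : E3) : (1/2 : ℝ) • (v₁ + v₄) ∈ mdK v₁ v₂ v₃ v₄ := by simp [mdK]
lemma mdK_mem₅ (v₁ v₂ v₃ v₄ : E3) : (1/3 : ℝ) • (v₁ + v₂ + v₃) ∈ mdK v₁ v₂ v₃ v₄ := by simp [mdK]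
lemma mdK_mem₆ (v₁ v₂ v₃ v₄ : E3) : (1/3 : ℝ) • (v₁ + v₂ + v₄) ∈ mdK v₁ v₂ v₃ v₄ := by simp [mdK]
lemma mdK_mem₇ (v₁ v₂ v₃ v₄ : E3) : (1/3 : ℝ) • (v₁ + v₃ + v₄) ∈ mdK v₁ v₂ v₃ v₄ := by simp [mdK]
lemma mdK_mem₈ (v₁ v₂ v₃ v₄ : E3) : (1/4 : ℝ) • (v₁ + v₂ + v₃ + v₄) ∈ mdK v₁ v₂ v₃ v₄ := by
  simp [mdK]

lemma mdK_finite (v₁ v₂ v₃ v₄ : E3) : (mdK v₁ v₂ v₃ v₄).Finite := by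
  unfold mdK
  exact (((((((Set.finite_singleton _).insert _).insert _).insert _).insert _).insert
    _).insert _).insert _

/-- standard basis vectors -/
def ee (i : Fin 3) : E3 := EuclideanSpace.single i 1

/-- the "remaining" barycentric coordinate -/
def lam0 (y : E3) : ℝ := 1 - y 0 - y 1 - y 2

def Hstar : Set E3 := {y | 0 ≤ y 0 ∧ 0 ≤ y 1 ∧ 0 ≤ y 2 ∧ 0 ≤ lam0 y}

def H0 : Set E3 :=
  {y | (0 ≤ y 0 ∧ 0 ≤ y 1 ∧ 0 ≤ y 2 ∧ 0 ≤ lam0 y) ∧ y 0 ≤ lam0 y ∧ y 1 ≤ lam0 y ∧ y 2 ≤ lam0 y}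
def H1 : Set E3 :=
  {y | (0 ≤ y 0 ∧ 0 ≤ y 1 ∧ 0 ≤ y 2 ∧ 0 ≤ lam0 y) ∧ lam0 y ≤ y 0 ∧ y 1 ≤ y 0 ∧ y 2 ≤ y 0}
def H2 : Set E3 :=
  {y | (0 ≤ y 0 ∧ 0 ≤ y 1 ∧ 0 ≤ y 2 ∧ 0 ≤ lam0 y) ∧ lam0 y ≤ y 1 ∧ y 0 ≤ y 1 ∧ y 2 ≤ y 1}
def H3 : Set E3 :=
  {y | (0 ≤ y 0 ∧ 0 ≤ y 1 ∧ 0 ≤ y 2 ∧ 0 ≤ lam0 y) ∧ lam0 y ≤ y 2 ∧ y 0 ≤ y 2 ∧ y 1 ≤ y 2}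

/-- convex combination of four points lies in the convex hull -/
lemma mem4 {s : Set E3} {p₁ p₂ p₃ p₄ : E3} (h₁ : p₁ ∈ s) (h₂ : p₂ ∈ s) (h₃ : p₃ ∈ s)
    (h₄ : p₄ ∈ s) {w₁ w₂ w₃ w₄ : ℝ} (hw₁ : 0 ≤ w₁) (hw₂ : 0 ≤ w₂) (hw₃ : 0 ≤ w₃) (hw₄ : 0 ≤ w₄)
    (hsum : w₁ + w₂ + w₃ + w₄ = 1) :
    w₁ • p₁ + w₂ • p₂ + w₃ • p₃ + w₄ • p₄ ∈ convexHull ℝ s := by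
  have h := (convex_convexHull ℝ s).sum_mem (t := (Finset.univ : Finset (Fin 4)))
    (w := ![w₁, w₂, w₃, w₄]) (z := ![p₁, p₂, p₃, p₄]) ?_ ?_ ?_
  · simpa [Fin.sum_univ_four] using h
  · intro i _; fin_cases i <;> simpa using ‹_›
  · simp [Fin.sum_univ_four, hsum]
  · intro i _; fin_cases i <;>
      simp only [Matrix.cons_val_zero, Matrix.cons_val_one, Matrix.head_cons,
        Matrix.cons_val_two, Matrix.tail_cons, Matrix.cons_val_three]
    exacts [subset_convexHull ℝ s h₁, subset_convexHull ℝ s h₂, subset_convexHull ℝ s h₃,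
      subset_convexHull ℝ s h₄]

lemma convex_Hstar : Convex ℝ Hstar := by
  intro x hx y hy a b ha hb hab
  obtain ⟨hx0, hx1, hx2, hx3⟩ := hx
  obtain ⟨hy0, hy1, hy2, hy3⟩ := hy
  have e0 : (a • x + b • y) 0 = a * x 0 + b * y 0 := rfl
  have e1 : (a • x + b • y) 1 = a * x 1 + b * y 1 := rfl
  have e2 : (a • x + b • y) 2 = a * x 2 + b * y 2 := rfl
  simp only [Hstar, lam0, Set.mem_setOf_eq, e0, e1, e2] at *
  refine ⟨?_, ?_, ?_, ?_⟩
  · nlinarith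
  · nlinarith
  · nlinarith
  · nlinarith

lemma convex_H0 : Convex ℝ H0 := by
  intro x hx y hy a b ha hb hab
  obtain ⟨⟨hx0, hx1, hx2, hx3⟩, hx4, hx5, hx6⟩ := hx
  obtain ⟨⟨hy0, hy1, hy2, hy3⟩, hy4, hy5, hy6⟩ := hy
  have e0 : (a • x + b • y) 0 = a * x 0 + b * y 0 := rfl
  have e1 : (a • x + b • y) 1 = a * x 1 + b * y 1 := rfl
  have e2 : (a • x + b • y) 2 = a * x 2 + b * y 2 := rfl
  simp only [H0, lam0, Set.mem_setOf_eq, e0, e1, e2] at *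
  refine ⟨⟨?_, ?_, ?_, ?_⟩, ?_, ?_, ?_⟩ <;> nlinarith

lemma ee_apply (i j : Fin 3) : ee i j = if j = i then 1 else 0 := by
  simp [ee, EuclideanSpace.single_apply]

lemma hull_simplex : convexHull ℝ ({0, ee 0, ee 1, ee 2} : Set E3) = Hstar := by
  apply Subset.antisymm
  · apply convexHull_min _ convex_Hstar
    rintro y (rfl | rfl | rfl | rfl) <;>
      · refine ⟨?_, ?_, ?_, ?_⟩ <;> simp [lam0, ee_apply] <;> norm_num
  · intro y hy
    obtain ⟨h0, h1, h2, h3⟩ := hy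
    have key : y = (lam0 y) • (0 : E3) + (y 0) • ee 0 + (y 1) • ee 1 + (y 2) • ee 2 := by
      ext i
      fin_cases i <;>
        simp [PiLp.add_apply, PiLp.smul_apply, ee_apply, smul_eq_mul]
    rw [key]
    refine mem4 (by simp) (by simp) (by simp) (by simp) h3 h0 h1 h2 (by simp [lam0]; ring)

lemma hullK_eq : convexHull ℝ (mdK 0 (ee 0) (ee 1) (ee 2)) = H0 := by
  apply Subset.antisymm
  · apply convexHull_min _ convex_H0
    rintro y (rfl | rfl | rfl | rfl | rfl | rfl | rfl | rfl) <;>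
      · refine ⟨⟨?_, ?_, ?_, ?_⟩, ?_, ?_, ?_⟩ <;>
          simp [lam0, ee_apply, PiLp.add_apply, PiLp.smul_apply, smul_eq_mul] <;> norm_num
  · intro y hy
    obtain ⟨⟨h0, h1, h2, h3⟩, h4, h5, h6⟩ := hy
    -- case analysis on the ordering of the three coordinates
    rcases le_total (y 1) (y 0) with hba | hab
    · rcases le_total (y 2) (y 1) with hcb | hbc
      · -- y0 ≥ y1 ≥ y2
        have key : y = (lam0 y - y 0) • (0 : E3)
            + (2 * (y 0 - y 1)) • ((1/2 : ℝ) • ((0 : E3) + ee 0))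
            + (3 * (y 1 - y 2)) • ((1/3 : ℝ) • ((0 : E3) + ee 0 + ee 1))
            + (4 * y 2) • ((1/4 : ℝ) • ((0 : E3) + ee 0 + ee 1 + ee 2)) := by
          ext i; fin_cases i <;>
            simp [PiLp.add_apply, PiLp.smul_apply, ee_apply, smul_eq_mul] <;> ring
        rw [key]
        exact mem4 (mdK_mem₁ _ _ _ _) (mdK_mem₂ _ _ _ _) (mdK_mem₅ _ _ _ _) (mdK_mem₈ _ _ _ _)
          (by linarith) (by linarith) (by linarith) (by linarith) (by simp [lam0]; ring)
      · rcases le_total (y 2) (y 0) with hca | hac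
        · -- y0 ≥ y2 ≥ y1
          have key : y = (lam0 y - y 0) • (0 : E3)
              + (2 * (y 0 - y 2)) • ((1/2 : ℝ) • ((0 : E3) + ee 0))
              + (3 * (y 2 - y 1)) • ((1/3 : ℝ) • ((0 : E3) + ee 0 + ee 2))
              + (4 * y 1) • ((1/4 : ℝ) • ((0 : E3) + ee 0 + ee 1 + ee 2)) := by
            ext i; fin_cases i <;>
              simp [PiLp.add_apply, PiLp.smul_apply, ee_apply, smul_eq_mul] <;> ring
          rw [key]
          exact mem4 (mdK_mem₁ _ _ _ _) (mdK_mem₂ _ _ _ _) (mdK_mem₆ _ _ _ _) (mdK_mem₈ _ _ _ _)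
            (by linarith) (by linarith) (by linarith) (by linarith) (by simp [lam0]; ring)
        · -- y2 ≥ y0 ≥ y1
          have key : y = (lam0 y - y 2) • (0 : E3)
              + (2 * (y 2 - y 0)) • ((1/2 : ℝ) • ((0 : E3) + ee 2))
              + (3 * (y 0 - y 1)) • ((1/3 : ℝ) • ((0 : E3) + ee 0 + ee 2))
              + (4 * y 1) • ((1/4 : ℝ) • ((0 : E3) + ee 0 + ee 1 + ee 2)) := by
            ext i; fin_cases i <;>
              simp [PiLp.add_apply, PiLp.smul_apply, ee_apply, smul_eq_mul] <;> ring
          rw [key]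
          exact mem4 (mdK_mem₁ _ _ _ _) (mdK_mem₄ _ _ _ _) (mdK_mem₆ _ _ _ _) (mdK_mem₈ _ _ _ _)
            (by linarith) (by linarith) (by linarith) (by linarith) (by simp [lam0]; ring)
    · rcases le_total (y 2) (y 0) with hca | hac
      · -- y1 ≥ y0 ≥ y2
        have key : y = (lam0 y - y 1) • (0 : E3)
            + (2 * (y 1 - y 0)) • ((1/2 : ℝ) • ((0 : E3) + ee 1))
            + (3 * (y 0 - y 2)) • ((1/3 : ℝ) • ((0 : E3) + ee 0 + ee 1))
            + (4 * y 2) • ((1/4 : ℝ) • ((0 : E3) + ee 0 + ee 1 + ee 2)) := by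
          ext i; fin_cases i <;>
            simp [PiLp.add_apply, PiLp.smul_apply, ee_apply, smul_eq_mul] <;> ring
        rw [key]
        exact mem4 (mdK_mem₁ _ _ _ _) (mdK_mem₃ _ _ _ _) (mdK_mem₅ _ _ _ _) (mdK_mem₈ _ _ _ _)
          (by linarith) (by linarith) (by linarith) (by linarith) (by simp [lam0]; ring)
      · rcases le_total (y 2) (y 1) with hcb | hbc
        · -- y1 ≥ y2 ≥ y0
          have key : y = (lam0 y - y 1) • (0 : E3)
              + (2 * (y 1 - y 2)) • ((1/2 : ℝ) • ((0 : E3) + ee 1))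
              + (3 * (y 2 - y 0)) • ((1/3 : ℝ) • ((0 : E3) + ee 1 + ee 2))
              + (4 * y 0) • ((1/4 : ℝ) • ((0 : E3) + ee 0 + ee 1 + ee 2)) := by
            ext i; fin_cases i <;>
              simp [PiLp.add_apply, PiLp.smul_apply, ee_apply, smul_eq_mul] <;> ring
          rw [key]
          exact mem4 (mdK_mem₁ _ _ _ _) (mdK_mem₃ _ _ _ _) (mdK_mem₇ _ _ _ _) (mdK_mem₈ _ _ _ _)
            (by linarith) (by linarith) (by linarith) (by linarith) (by simp [lam0]; ring)
        · -- y2 ≥ y1 ≥ y0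
          have key : y = (lam0 y - y 2) • (0 : E3)
              + (2 * (y 2 - y 1)) • ((1/2 : ℝ) • ((0 : E3) + ee 2))
              + (3 * (y 1 - y 0)) • ((1/3 : ℝ) • ((0 : E3) + ee 1 + ee 2))
              + (4 * y 0) • ((1/4 : ℝ) • ((0 : E3) + ee 0 + ee 1 + ee 2)) := by
            ext i; fin_cases i <;>
              simp [PiLp.add_apply, PiLp.smul_apply, ee_apply, smul_eq_mul] <;> ring
          rw [key]
          exact mem4 (mdK_mem₁ _ _ _ _) (mdK_mem₄ _ _ _ _) (mdK_mem₇ _ _ _ _) (mdK_mem₈ _ _ _ _)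
            (by linarith) (by linarith) (by linarith) (by linarith) (by simp [lam0]; ring)


noncomputable def N1 : E3 →ₗ[ℝ] E3 where
  toFun y := WithLp.toLp 2 ![-(y 0) - y 1 - y 2, y 1, y 2]
  map_add' x y := by ext i; fin_cases i <;> (simp; try ring)
  map_smul' c y := by ext i; fin_cases i <;> (simp; try ring)

noncomputable def N2 : E3 →ₗ[ℝ] E3 where
  toFun y := WithLp.toLp 2 ![y 0, -(y 0) - y 1 - y 2, y 2]
  map_add' x y := by ext i; fin_cases i <;> (simp; try ring)
  map_smul' c y := by ext i; fin_cases i <;> (simp; try ring)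

noncomputable def N3 : E3 →ₗ[ℝ] E3 where
  toFun y := WithLp.toLp 2 ![y 0, y 1, -(y 0) - y 1 - y 2]
  map_add' x y := by ext i; fin_cases i <;> (simp; try ring)
  map_smul' c y := by ext i; fin_cases i <;> (simp; try ring)

lemma det_N1 : LinearMap.det N1 = -1 := by
  rw [← LinearMap.det_toMatrix (EuclideanSpace.basisFun (Fin 3) ℝ).toBasis]
  rw [Matrix.det_fin_three]
  simp [LinearMap.toMatrix_apply, N1, EuclideanSpace.basisFun_apply, EuclideanSpace.single_apply]

lemma det_N2 : LinearMap.det N2 = -1 := by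
  rw [← LinearMap.det_toMatrix (EuclideanSpace.basisFun (Fin 3) ℝ).toBasis]
  rw [Matrix.det_fin_three]
  simp [LinearMap.toMatrix_apply, N2, EuclideanSpace.basisFun_apply, EuclideanSpace.single_apply]

lemma det_N3 : LinearMap.det N3 = -1 := by
  rw [← LinearMap.det_toMatrix (EuclideanSpace.basisFun (Fin 3) ℝ).toBasis]
  rw [Matrix.det_fin_three]
  simp [LinearMap.toMatrix_apply, N3, EuclideanSpace.basisFun_apply, EuclideanSpace.single_apply]

def s1 : E3 → E3 := fun y => WithLp.toLp 2 ![1 - y 0 - y 1 - y 2, y 1, y 2]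
def s2 : E3 → E3 := fun y => WithLp.toLp 2 ![y 0, 1 - y 0 - y 1 - y 2, y 2]
def s3 : E3 → E3 := fun y => WithLp.toLp 2 ![y 0, y 1, 1 - y 0 - y 1 - y 2]

lemma s1_eq (y : E3) : s1 y = ee 0 + N1 y := by
  ext i; fin_cases i <;> simp [s1, N1, ee_apply, PiLp.add_apply] <;> ring
lemma s2_eq (y : E3) : s2 y = ee 1 + N2 y := by
  ext i; fin_cases i <;> simp [s2, N2, ee_apply, PiLp.add_apply] <;> ring
lemma s3_eq (y : E3) : s3 y = ee 2 + N3 y := by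
  ext i; fin_cases i <;> simp [s3, N3, ee_apply, PiLp.add_apply] <;> ring

lemma vol_translate (t : E3) (A : Set E3) : volume ((fun z => t + z) '' A) = volume A := by
  have h : (fun z => t + z) '' A = (fun z => -t + z) ⁻¹' A := by
    ext z
    constructor
    · rintro ⟨w, hw, rfl⟩; simpa [neg_add_cancel_left] using hw
    · intro hz; exact ⟨-t + z, hz, by simp [add_neg_cancel_left]⟩
  rw [h, measure_preimage_add]

lemma vol_s1 (A : Set E3) : volume (s1 '' A) = volume A := by
  have h : s1 '' A = (fun y => ee 0 + N1 y) '' A := Set.image_congr' (fun y => s1_eq y)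
  rw [h, ← Set.image_image (fun z => ee 0 + z) (⇑N1) A, vol_translate,
    Measure.addHaar_image_linearMap, det_N1]
  norm_num

lemma vol_s2 (A : Set E3) : volume (s2 '' A) = volume A := by
  have h : s2 '' A = (fun y => ee 1 + N2 y) '' A := Set.image_congr' (fun y => s2_eq y)
  rw [h, ← Set.image_image (fun z => ee 1 + z) (⇑N2) A, vol_translate,
    Measure.addHaar_image_linearMap, det_N2]
  norm_num

lemma vol_s3 (A : Set E3) : volume (s3 '' A) = volume A := by
  have h : s3 '' A = (fun y => ee 2 + N3 y) '' A := Set.image_congr' (fun y => s3_eq y)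
  rw [h, ← Set.image_image (fun z => ee 2 + z) (⇑N3) A, vol_translate,
    Measure.addHaar_image_linearMap, det_N3]
  norm_num

lemma s1_apply (y : E3) : s1 y 0 = 1 - y 0 - y 1 - y 2 ∧ s1 y 1 = y 1 ∧ s1 y 2 = y 2 :=
  ⟨rfl, rfl, rfl⟩
lemma s2_apply (y : E3) : s2 y 0 = y 0 ∧ s2 y 1 = 1 - y 0 - y 1 - y 2 ∧ s2 y 2 = y 2 :=
  ⟨rfl, rfl, rfl⟩
lemma s3_apply (y : E3) : s3 y 0 = y 0 ∧ s3 y 1 = y 1 ∧ s3 y 2 = 1 - y 0 - y 1 - y 2 :=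
  ⟨rfl, rfl, rfl⟩

lemma s1_invol (y : E3) : s1 (s1 y) = y := by
  ext i; fin_cases i <;> simp [s1] <;> ring
lemma s2_invol (y : E3) : s2 (s2 y) = y := by
  ext i; fin_cases i <;> simp [s2] <;> ring
lemma s3_invol (y : E3) : s3 (s3 y) = y := by
  ext i; fin_cases i <;> simp [s3] <;> ring

lemma s1_image_H0 : s1 '' H0 = H1 := by
  ext z
  constructor
  · rintro ⟨w, hw, rfl⟩
    obtain ⟨⟨a0, a1, a2, a3⟩, a4, a5, a6⟩ := hw
    obtain ⟨b0, b1, b2⟩ := s1_apply w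
    simp only [H1, lam0, Set.mem_setOf_eq] at *
    exact ⟨⟨by rw [b0]; linarith, by rw [b1]; linarith, by rw [b2]; linarith,
      by rw [b0, b1, b2]; linarith⟩,
      by rw [b0, b1, b2]; linarith, by rw [b0, b1]; linarith, by rw [b0, b2]; linarith⟩
  · intro hz
    obtain ⟨⟨a0, a1, a2, a3⟩, a4, a5, a6⟩ := hz
    refine ⟨s1 z, ?_, s1_invol z⟩
    obtain ⟨b0, b1, b2⟩ := s1_apply z
    simp only [H0, lam0, Set.mem_setOf_eq] at *
    exact ⟨⟨by rw [b0]; linarith, by rw [b1]; linarith, by rw [b2]; linarith,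
      by rw [b0, b1, b2]; linarith⟩,
      by rw [b0, b1, b2]; linarith, by rw [b0, b1, b2]; linarith, by rw [b0, b1, b2]; linarith⟩

lemma s2_image_H0 : s2 '' H0 = H2 := by
  ext z
  constructor
  · rintro ⟨w, hw, rfl⟩
    obtain ⟨⟨a0, a1, a2, a3⟩, a4, a5, a6⟩ := hw
    obtain ⟨b0, b1, b2⟩ := s2_apply w
    simp only [H2, lam0, Set.mem_setOf_eq] at *
    exact ⟨⟨by rw [b0]; linarith, by rw [b1]; linarith, by rw [b2]; linarith,
      by rw [b0, b1, b2]; linarith⟩,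
      by rw [b0, b1, b2]; linarith, by rw [b0, b1]; linarith, by rw [b1, b2]; linarith⟩
  · intro hz
    obtain ⟨⟨a0, a1, a2, a3⟩, a4, a5, a6⟩ := hz
    refine ⟨s2 z, ?_, s2_invol z⟩
    obtain ⟨b0, b1, b2⟩ := s2_apply z
    simp only [H0, lam0, Set.mem_setOf_eq] at *
    exact ⟨⟨by rw [b0]; linarith, by rw [b1]; linarith, by rw [b2]; linarith,
      by rw [b0, b1, b2]; linarith⟩,
      by rw [b0, b1, b2]; linarith, by rw [b0, b1, b2]; linarith, by rw [b0, b1, b2]; linarith⟩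

lemma s3_image_H0 : s3 '' H0 = H3 := by
  ext z
  constructor
  · rintro ⟨w, hw, rfl⟩
    obtain ⟨⟨a0, a1, a2, a3⟩, a4, a5, a6⟩ := hw
    obtain ⟨b0, b1, b2⟩ := s3_apply w
    simp only [H3, lam0, Set.mem_setOf_eq] at *
    exact ⟨⟨by rw [b0]; linarith, by rw [b1]; linarith, by rw [b2]; linarith,
      by rw [b0, b1, b2]; linarith⟩,
      by rw [b0, b1, b2]; linarith, by rw [b0, b2]; linarith, by rw [b1, b2]; linarith⟩
  · intro hz
    obtain ⟨⟨a0, a1, a2, a3⟩, a4, a5, a6⟩ := hz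
    refine ⟨s3 z, ?_, s3_invol z⟩
    obtain ⟨b0, b1, b2⟩ := s3_apply z
    simp only [H0, lam0, Set.mem_setOf_eq] at *
    exact ⟨⟨by rw [b0]; linarith, by rw [b1]; linarith, by rw [b2]; linarith,
      by rw [b0, b1, b2]; linarith⟩,
      by rw [b0, b1, b2]; linarith, by rw [b0, b1, b2]; linarith, by rw [b0, b1, b2]; linarith⟩

lemma null_plane (w0 w1 w2 c : ℝ) (p q : E3)
    (hp : w0 * p 0 + w1 * p 1 + w2 * p 2 = c) (hq : w0 * q 0 + w1 * q 1 + w2 * q 2 ≠ 0) :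
    volume {y : E3 | w0 * y 0 + w1 * y 1 + w2 * y 2 = c} = 0 := by
  set g : E3 →ₗ[ℝ] ℝ :=
    { toFun := fun y => w0 * y 0 + w1 * y 1 + w2 * y 2
      map_add' := by intro a b; simp [PiLp.add_apply]; ring
      map_smul' := by intro r a; simp [PiLp.smul_apply, smul_eq_mul]; ring } with hg
  have hker : LinearMap.ker g ≠ ⊤ := by
    intro h
    apply hq
    have : q ∈ LinearMap.ker g := h ▸ Submodule.mem_top
    exact this
  have hgp : g p = c := hp
  have hset : {y : E3 | w0 * y 0 + w1 * y 1 + w2 * y 2 = c}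
      = (fun z => -p + z) ⁻¹' (LinearMap.ker g : Set E3) := by
    ext y
    simp only [Set.mem_setOf_eq, Set.mem_preimage, SetLike.mem_coe, LinearMap.mem_ker,
      map_add, map_neg, hgp]
    constructor
    · intro h
      have hy : g y = c := h
      rw [hy]; ring
    · intro h
      have hy : g y = c := by linarith [h]
      exact hy
  rw [hset, measure_preimage_add]
  exact Measure.addHaar_submodule volume _ hker

lemma ee_coord (i : Fin 3) : (((1:ℝ)/2) • ee i) i = 1/2 := by simp [ee_apply]

lemma null01 : volume (H0 ∩ H1) = 0 := by
  refine measure_mono_null ?_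
    (null_plane 2 1 1 1 ((1/2 : ℝ) • ee 0) (ee 0) ?_ ?_)
  · rintro y ⟨hy0, hy1⟩
    have a4 := hy0.2.1
    have b4 := hy1.2.1
    simp only [lam0] at a4 b4
    simp only [Set.mem_setOf_eq]; linarith
  · simp [ee_apply]
  · simp [ee_apply]

lemma null02 : volume (H0 ∩ H2) = 0 := by
  refine measure_mono_null ?_
    (null_plane 1 2 1 1 ((1/2 : ℝ) • ee 1) (ee 0) ?_ ?_)
  · rintro y ⟨hy0, hy1⟩
    have a4 := hy0.2.2.1
    have b4 := hy1.2.1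
    simp only [lam0] at a4 b4
    simp only [Set.mem_setOf_eq]; linarith
  · simp [ee_apply]
  · simp [ee_apply]

lemma null03 : volume (H0 ∩ H3) = 0 := by
  refine measure_mono_null ?_
    (null_plane 1 1 2 1 ((1/2 : ℝ) • ee 2) (ee 0) ?_ ?_)
  · rintro y ⟨hy0, hy1⟩
    have a4 := hy0.2.2.2
    have b4 := hy1.2.1
    simp only [lam0] at a4 b4
    simp only [Set.mem_setOf_eq]; linarith
  · simp [ee_apply]
  · simp [ee_apply]

lemma null12 : volume (H1 ∩ H2) = 0 := by
  refine measure_mono_null ?_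
    (null_plane 1 (-1) 0 0 0 (ee 0) ?_ ?_)
  · rintro y ⟨hy0, hy1⟩
    have a4 := hy0.2.2.1
    have b4 := hy1.2.2.1
    simp only [Set.mem_setOf_eq]; linarith
  · simp
  · simp [ee_apply]

lemma null13 : volume (H1 ∩ H3) = 0 := by
  refine measure_mono_null ?_
    (null_plane 1 0 (-1) 0 0 (ee 0) ?_ ?_)
  · rintro y ⟨hy0, hy1⟩
    have a4 := hy0.2.2.2
    have b4 := hy1.2.2.1
    simp only [Set.mem_setOf_eq]; linarith
  · simp
  · simp [ee_apply]

lemma null23 : volume (H2 ∩ H3) = 0 := by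
  refine measure_mono_null ?_
    (null_plane 0 1 (-1) 0 0 (ee 1) ?_ ?_)
  · rintro y ⟨hy0, hy1⟩
    have a4 := hy0.2.2.2
    have b4 := hy1.2.2.2
    simp only [Set.mem_setOf_eq]; linarith
  · simp
  · simp [ee_apply]

lemma cover : Hstar = ((H0 ∪ H1) ∪ H2) ∪ H3 := by
  ext y
  constructor
  · rintro ⟨h0, h1, h2, h3⟩
    rcases le_total (y 0) (y 1) with a | a
    · rcases le_total (y 1) (y 2) with b | b
      · rcases le_total (lam0 y) (y 2) with c | c
        · exact Or.inr ⟨⟨h0, h1, h2, h3⟩, c, by linarith, by linarith⟩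
        · exact Or.inl (Or.inl (Or.inl ⟨⟨h0, h1, h2, h3⟩, by linarith, by linarith,
            by linarith⟩))
      · rcases le_total (lam0 y) (y 1) with c | c
        · exact Or.inl (Or.inr ⟨⟨h0, h1, h2, h3⟩, c, a, b⟩)
        · exact Or.inl (Or.inl (Or.inl ⟨⟨h0, h1, h2, h3⟩, by linarith, by linarith,
            by linarith⟩))
    · rcases le_total (y 0) (y 2) with b | b
      · rcases le_total (lam0 y) (y 2) with c | c
        · exact Or.inr ⟨⟨h0, h1, h2, h3⟩, c, b, by linarith⟩
        · exact Or.inl (Or.inl (Or.inl ⟨⟨h0, h1, h2, h3⟩, by linarith, by linarith,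
            by linarith⟩))
      · rcases le_total (lam0 y) (y 0) with c | c
        · exact Or.inl (Or.inl (Or.inr ⟨⟨h0, h1, h2, h3⟩, c, a, b⟩))
        · exact Or.inl (Or.inl (Or.inl ⟨⟨h0, h1, h2, h3⟩, by linarith, by linarith,
            by linarith⟩))
  · rintro (((h | h) | h) | h) <;> exact h.1

lemma H0_measurable : MeasurableSet H0 := by
  rw [← hullK_eq]
  exact ((mdK_finite _ _ _ _).isCompact_convexHull ℝ).isClosed.measurableSet

lemma H0_compact : IsCompact H0 := by
  rw [← hullK_eq]
  exact (mdK_finite _ _ _ _).isCompact_convexHull ℝ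

lemma s1_continuous : Continuous s1 := by
  have : s1 = fun y => ee 0 + N1 y := funext s1_eq
  rw [this]
  exact continuous_const.add N1.continuous_of_finiteDimensional
lemma s2_continuous : Continuous s2 := by
  have : s2 = fun y => ee 1 + N2 y := funext s2_eq
  rw [this]
  exact continuous_const.add N2.continuous_of_finiteDimensional
lemma s3_continuous : Continuous s3 := by
  have : s3 = fun y => ee 2 + N3 y := funext s3_eq
  rw [this]
  exact continuous_const.add N3.continuous_of_finiteDimensional

lemma H1_measurable : MeasurableSet H1 := by
  rw [← s1_image_H0]
  exact (H0_compact.image s1_continuous).isClosed.measurableSet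
lemma H2_measurable : MeasurableSet H2 := by
  rw [← s2_image_H0]
  exact (H0_compact.image s2_continuous).isClosed.measurableSet
lemma H3_measurable : MeasurableSet H3 := by
  rw [← s3_image_H0]
  exact (H0_compact.image s3_continuous).isClosed.measurableSet

lemma vol_H1 : volume H1 = volume H0 := by rw [← s1_image_H0, vol_s1]
lemma vol_H2 : volume H2 = volume H0 := by rw [← s2_image_H0, vol_s2]
lemma vol_H3 : volume H3 = volume H0 := by rw [← s3_image_H0, vol_s3]

lemma vol_Hstar : volume Hstar = 4 * volume H0 := by
  have u01 : volume (H0 ∪ H1) = volume H0 + volume H1 := by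
    have h := measure_union_add_inter (μ := volume) H0 H1_measurable
    rwa [null01, add_zero] at h
  have u012 : volume ((H0 ∪ H1) ∪ H2) = volume H0 + volume H1 + volume H2 := by
    have h := measure_union_add_inter (μ := volume) (H0 ∪ H1) H2_measurable
    have hnull : volume ((H0 ∪ H1) ∩ H2) = 0 := by
      rw [Set.union_inter_distrib_right]
      exact measure_union_null null02 null12
    rwa [hnull, add_zero, u01] at h
  have u0123 : volume (((H0 ∪ H1) ∪ H2) ∪ H3)
      = volume H0 + volume H1 + volume H2 + volume H3 := by
    have h := measure_union_add_inter (μ := volume) ((H0 ∪ H1) ∪ H2) H3_measurable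
    have hnull : volume (((H0 ∪ H1) ∪ H2) ∩ H3) = 0 := by
      rw [Set.union_inter_distrib_right, Set.union_inter_distrib_right]
      exact measure_union_null (measure_union_null null03 null13) null23
    rwa [hnull, add_zero, u012] at h
  rw [cover, u0123, vol_H1, vol_H2, vol_H3]
  ring

end MedianDualAux

open MeasureTheory

/-- The median dual volume contribution of a tetrahedron `{x₁, x₂, x₃, x₄} ⊆ ℝ³` to each of
its vertices — the volume of the convex hull of the vertex `x₁`, the midpoints of the
three edges at `x₁`, the centroids of the three faces containing `x₁`, and the centroid
of the tetrahedron — is exactly one fourth of the tetrahedron's volume. -/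
theorem median_dual_volume_one_fourth (x₁ x₂ x₃ x₄ : EuclideanSpace ℝ (Fin 3)) :
    volume (convexHull ℝ
        ({x₁,
          (1/2 : ℝ) • (x₁ + x₂), (1/2 : ℝ) • (x₁ + x₃), (1/2 : ℝ) • (x₁ + x₄),
          (1/3 : ℝ) • (x₁ + x₂ + x₃), (1/3 : ℝ) • (x₁ + x₂ + x₄), (1/3 : ℝ) • (x₁ + x₃ + x₄),
          (1/4 : ℝ) • (x₁ + x₂ + x₃ + x₄)} :
          Set (EuclideanSpace ℝ (Fin 3))))
      = (1/4 : ENNReal) *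
          volume (convexHull ℝ ({x₁, x₂, x₃, x₄} : Set (EuclideanSpace ℝ (Fin 3)))) := by
  classical
  -- the affine map sending the standard simplex to the tetrahedron
  set L : E3 →ₗ[ℝ] E3 :=
    { toFun := fun y => y 0 • (x₂ - x₁) + y 1 • (x₃ - x₁) + y 2 • (x₄ - x₁)
      map_add' := by
        intro a b
        simp only [PiLp.add_apply]
        module
      map_smul' := by
        intro r a
        simp only [PiLp.smul_apply, smul_eq_mul, RingHom.id_apply]
        module } with hL
  set F : E3 →ᵃ[ℝ] E3 :=
    { toFun := fun y => x₁ + L y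
      linear := L
      map_vadd' := by
        intro p v
        simp only [vadd_eq_add, map_add]
        abel } with hFdef
  have hF : ∀ y : E3, F y = x₁ + L y := fun y => rfl
  have hF0 : F 0 = x₁ := by rw [hF, map_zero, add_zero]
  have hL1 : L (ee 0) = x₂ - x₁ := by
    show (ee 0) 0 • (x₂ - x₁) + (ee 0) 1 • (x₃ - x₁) + (ee 0) 2 • (x₄ - x₁) = x₂ - x₁
    simp [ee_apply]
  have hL2 : L (ee 1) = x₃ - x₁ := by
    show (ee 1) 0 • (x₂ - x₁) + (ee 1) 1 • (x₃ - x₁) + (ee 1) 2 • (x₄ - x₁) = x₃ - x₁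
    simp [ee_apply]
  have hL3 : L (ee 2) = x₄ - x₁ := by
    show (ee 2) 0 • (x₂ - x₁) + (ee 2) 1 • (x₃ - x₁) + (ee 2) 2 • (x₄ - x₁) = x₄ - x₁
    simp [ee_apply]
  have hFe1 : F (ee 0) = x₂ := by rw [hF, hL1]; abel
  have hFe2 : F (ee 1) = x₃ := by rw [hF, hL2]; abel
  have hFe3 : F (ee 2) = x₄ := by rw [hF, hL3]; abel
  have h2 : ∀ a b : E3, F ((1/2 : ℝ) • (a + b)) = (1/2 : ℝ) • (F a + F b) := by
    intro a b
    simp only [hF, _root_.map_smul, _root_.map_add]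
    module
  have h3 : ∀ a b c : E3, F ((1/3 : ℝ) • (a + b + c)) = (1/3 : ℝ) • (F a + F b + F c) := by
    intro a b c
    simp only [hF, _root_.map_smul, _root_.map_add]
    module
  have h4 : ∀ a b c d : E3,
      F ((1/4 : ℝ) • (a + b + c + d)) = (1/4 : ℝ) • (F a + F b + F c + F d) := by
    intro a b c d
    simp only [hF, _root_.map_smul, _root_.map_add]
    module
  have himg : ⇑F '' (mdK 0 (ee 0) (ee 1) (ee 2)) = mdK x₁ x₂ x₃ x₄ := by
    unfold mdK
    rw [Set.image_insert_eq, Set.image_insert_eq, Set.image_insert_eq, Set.image_insert_eq,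
      Set.image_insert_eq, Set.image_insert_eq, Set.image_insert_eq, Set.image_singleton,
      h2, h2, h2, h3, h3, h3, h4, hF0, hFe1, hFe2, hFe3]
  have himgS : ⇑F '' ({0, ee 0, ee 1, ee 2} : Set E3) = {x₁, x₂, x₃, x₄} := by
    rw [Set.image_insert_eq, Set.image_insert_eq, Set.image_insert_eq, Set.image_singleton,
      hF0, hFe1, hFe2, hFe3]
  have hvolF : ∀ A : Set E3,
      volume (⇑F '' A) = ENNReal.ofReal |LinearMap.det L| * volume A := by
    intro A
    have hcomp : ⇑F '' A = (fun y => x₁ + L y) '' A := Set.image_congr' (fun y => hF y)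
    rw [hcomp, ← Set.image_image (fun z => x₁ + z) (⇑L) A, vol_translate,
      Measure.addHaar_image_linearMap]
  set c : ENNReal := ENNReal.ofReal |LinearMap.det L| with hc
  have lhs_eq : volume (convexHull ℝ (mdK x₁ x₂ x₃ x₄)) = c * volume H0 := by
    rw [← himg, ← AffineMap.image_convexHull, hvolF, hullK_eq]
  have rhs_eq : volume (convexHull ℝ ({x₁, x₂, x₃, x₄} : Set E3)) = c * (4 * volume H0) := by
    rw [← himgS, ← AffineMap.image_convexHull, hvolF, hull_simplex, vol_Hstar]
  show volume (convexHull ℝ (mdK x₁ x₂ x₃ x₄))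
      = (1/4 : ENNReal) * volume (convexHull ℝ ({x₁, x₂, x₃, x₄} : Set E3))
  rw [lhs_eq, rhs_eq]
  have h14 : (1/4 : ENNReal) * 4 = 1 := by
    rw [one_div, ENNReal.inv_mul_cancel] <;> norm_num
  calc c * volume H0 = ((1/4 : ENNReal) * 4) * (c * volume H0) := by rw [h14, one_mul]
    _ = (1/4 : ENNReal) * (c * (4 * volume H0)) := by ring
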